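/- Suppose Σ_{l=1}^L B_l B_l^T has full rank K_r. Let U_r be an n_r × K_r real matrix with orthonormal columns and Λ_r a K_r × K_r diagonal matrix with nonzero diagonal entries such that S̃_r = U_r Λ_r U_r^T, and suppose every row of U_r is nonzero. Let U_r* be the matrix obtained from U_r by normalizing each row to unit Euclidean length. Then for all i, ĩ ∈ [n_r]: U_r*(i,:) = U_r*(ĩ,:) if and only if Z_r(i,:) = Z_r(ĩ,:); moreover, whenever Z_r(i,:) ≠ Z_r(ĩ,:) one has ‖U_r*(i,:) − U_r*(ĩ,:)‖ = √2 (i.e., the normalized rows of distinct communities are orthogonal unit vectors). -/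

import Mathlib

open Matrix Finset

/-- Lemma 1 of the paper, row part, full-rank case.
If `∑ l, B l (B l)ᵀ` has full rank `K_r` and `S̃_r = U_r Λ_r U_rᵀ` with `U_r` having orthonormal
columns, `Λ_r` diagonal with nonzero diagonal entries, and all rows of `U_r` nonzero, then the
row-normalized matrix `U_r*` satisfies: `U_r*(i,:) = U_r*(i₂,:)` iff `Z_r(i,:) = Z_r(i₂,:)`,
and rows of distinct communities are at Euclidean distance `√2`. -/
theorem stmt1
    (nr nc Kr Kc L : ℕ)
    (hnr : 0 < nr) (hnc : 0 < nc) (hKr : 0 < Kr) (hKc : 0 < Kc) (hL : 0 < L)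
    (Zr : Matrix (Fin nr) (Fin Kr) ℝ) (Zc : Matrix (Fin nc) (Fin Kc) ℝ)
    (hZr01 : ∀ i k, Zr i k = 0 ∨ Zr i k = 1)
    (hZrrow : ∀ i, ∃! k, Zr i k = 1)
    (hZrcol : ∀ k, ∃ i, Zr i k = 1)
    (hZc01 : ∀ j k, Zc j k = 0 ∨ Zc j k = 1)
    (hZcrow : ∀ j, ∃! k, Zc j k = 1)
    (hZccol : ∀ k, ∃ j, Zc j k = 1)
    (θr : Fin nr → ℝ) (θc : Fin nc → ℝ)
    (hθr : ∀ i, 0 < θr i ∧ θr i ≤ 1) (hθc : ∀ j, 0 < θc j ∧ θc j ≤ 1)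
    (B : Fin L → Matrix (Fin Kr) (Fin Kc) ℝ)
    (hB01 : ∀ l k k', 0 ≤ B l k k' ∧ B l k k' ≤ 1)
    (Ωm : Fin L → Matrix (Fin nr) (Fin nc) ℝ)
    (hΩm : ∀ l, Ωm l = Matrix.diagonal θr * Zr * B l * (Zc)ᵀ * Matrix.diagonal θc)
    (Str : Matrix (Fin nr) (Fin nr) ℝ)
    (hStr : Str = ∑ l, Ωm l * (Ωm l)ᵀ)
    (hrank : (∑ l, B l * (B l)ᵀ).rank = Kr)
    (Ur : Matrix (Fin nr) (Fin Kr) ℝ) (Λr : Fin Kr → ℝ)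
    (hΛ : ∀ k, Λr k ≠ 0)
    (hUorth : (Ur)ᵀ * Ur = 1)
    (hdecomp : Str = Ur * Matrix.diagonal Λr * (Ur)ᵀ)
    (hrows : ∀ i, Ur i ≠ 0)
    (Ustar : Matrix (Fin nr) (Fin Kr) ℝ)
    (hUstar : ∀ i k, Ustar i k = Ur i k / Real.sqrt (∑ k', (Ur i k') ^ 2)) :
    ∀ i i₂ : Fin nr,
      (Ustar i = Ustar i₂ ↔ Zr i = Zr i₂) ∧
      (Zr i ≠ Zr i₂ →
        Real.sqrt (∑ k, (Ustar i k - Ustar i₂ k) ^ 2) = Real.sqrt 2) := by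
  classical
  -- community map
  choose c hc hcu' using fun i => (hZrrow i)
  have hcu : ∀ i k, Zr i k = 1 → k = c i := hcu'
  have hZind : ∀ i k, Zr i k = if k = c i then 1 else 0 := by
    intro i k
    by_cases h : k = c i
    · simp [h, hc i]
    · rcases hZr01 i k with h0 | h1
      · simp [h, h0]
      · exact absurd (hcu i k h1) h
  -- Step A: Str * Ur = Ur * diagonal Λr, hence Ur = Str * Ur * diag Λ⁻¹
  have hStrUr : Str * Ur = Ur * Matrix.diagonal Λr := by
    calc Str * Ur = Ur * Matrix.diagonal Λr * ((Ur)ᵀ * Ur) := by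
          rw [hdecomp, Matrix.mul_assoc]
      _ = Ur * Matrix.diagonal Λr := by rw [hUorth, Matrix.mul_one]
  have hUreq : Ur = Str * Ur * Matrix.diagonal (fun k => (Λr k)⁻¹) := by
    rw [hStrUr, Matrix.mul_assoc, Matrix.diagonal_mul_diagonal]
    have h1 : (fun k => Λr k * (Λr k)⁻¹) = fun _ : Fin Kr => (1:ℝ) := by
      funext k; exact mul_inv_cancel₀ (hΛ k)
    rw [h1]
    rw [show Matrix.diagonal (fun _ : Fin Kr => (1:ℝ)) = 1 from Matrix.diagonal_one,
      Matrix.mul_one]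
  -- Step B: factor Str through the membership matrix
  obtain ⟨N, hN⟩ : ∃ N : Matrix (Fin Kr) (Fin Kr) ℝ,
      N = ∑ l, (B l * (Zc)ᵀ * Matrix.diagonal θc) * (B l * (Zc)ᵀ * Matrix.diagonal θc)ᵀ :=
    ⟨_, rfl⟩
  have hStrfac : Str = Matrix.diagonal θr * (Zr * (N * ((Zr)ᵀ * Matrix.diagonal θr))) := by
    rw [hStr, hN, Matrix.sum_mul, Matrix.mul_sum, Matrix.mul_sum]
    refine Finset.sum_congr rfl fun l _ => ?_
    rw [hΩm]
    simp only [Matrix.transpose_mul, Matrix.diagonal_transpose, Matrix.mul_assoc]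
  obtain ⟨Q, hQ⟩ : ∃ Q : Matrix (Fin Kr) (Fin Kr) ℝ,
      Q = N * ((Zr)ᵀ * (Matrix.diagonal θr * (Ur * Matrix.diagonal (fun k => (Λr k)⁻¹)))) :=
    ⟨_, rfl⟩
  have hUQ : Ur = Matrix.diagonal θr * (Zr * Q) := by
    conv_lhs => rw [hUreq, hStrfac]
    rw [hQ]
    simp only [Matrix.mul_assoc]
  -- Step C: row formula for Ur
  have hrowU : ∀ i k, Ur i k = θr i * Q (c i) k := by
    intro i k
    conv_lhs => rw [hUQ]
    rw [Matrix.diagonal_mul, Matrix.mul_apply]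
    simp only [hZind, ite_mul, one_mul, zero_mul]
    rw [Finset.sum_ite_eq' Finset.univ (c i) (fun j => Q j k)]
    simp
  -- Step D: weighted orthogonality of the rows of Q
  obtain ⟨δ, hδ⟩ : ∃ δ : Fin Kr → ℝ,
      δ = fun k => ∑ i ∈ Finset.univ.filter (fun i => c i = k), (θr i)^2 := ⟨_, rfl⟩
  have hδpos : ∀ k, 0 < δ k := by
    intro k
    obtain ⟨i, hi⟩ := hZrcol k
    have hci : c i = k := (hcu i k hi).symm
    rw [hδ]
    refine Finset.sum_pos' (fun j _ => by positivity) ⟨i, ?_, pow_pos (hθr i).1 2⟩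
    simp [hci]
  have hQDQ : (Q)ᵀ * (Matrix.diagonal δ * Q) = 1 := by
    rw [← hUorth]
    ext a b
    rw [Matrix.mul_apply, Matrix.mul_apply]
    simp only [Matrix.transpose_apply, Matrix.diagonal_mul, hrowU]
    rw [← Finset.sum_fiberwise_of_maps_to (g := c) (fun x _ => Finset.mem_univ (c x))
      (fun i => (θr i * Q (c i) a) * (θr i * Q (c i) b))]
    refine Finset.sum_congr rfl fun k _ => ?_
    have hterm : ∀ i ∈ Finset.univ.filter (fun i => c i = k),
        (θr i * Q (c i) a) * (θr i * Q (c i) b) = θr i ^ 2 * (Q k a * Q k b) := by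
      intro i hi
      rw [(Finset.mem_filter.mp hi).2]; ring
    rw [Finset.sum_congr rfl hterm, ← Finset.sum_mul]
    simp only [hδ]
    ring
  -- Step E: V has orthonormal rows
  obtain ⟨V, hV⟩ : ∃ V : Matrix (Fin Kr) (Fin Kr) ℝ,
      V = Matrix.diagonal (fun k => Real.sqrt (δ k)) * Q := ⟨_, rfl⟩
  have hVk : ∀ a k, V a k = Real.sqrt (δ a) * Q a k := by
    intro a k; rw [hV, Matrix.diagonal_mul]
  have hVtV : (V)ᵀ * V = 1 := by
    rw [hV, Matrix.transpose_mul, Matrix.diagonal_transpose, Matrix.mul_assoc,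
      ← Matrix.mul_assoc (Matrix.diagonal _), Matrix.diagonal_mul_diagonal]
    have h2 : (fun k => Real.sqrt (δ k) * Real.sqrt (δ k)) = δ := by
      funext k; exact Real.mul_self_sqrt (hδpos k).le
    rw [h2, hQDQ]
  have hVVt : V * (V)ᵀ = 1 := mul_eq_one_comm.mp hVtV
  have hVrow : ∀ a b, (∑ k, V a k * V b k) = if a = b then 1 else 0 := by
    intro a b
    have h3 := congrFun (congrFun hVVt a) b
    simpa [Matrix.mul_apply, Matrix.transpose_apply, Matrix.one_apply] using h3
  -- Step F: Ustar i = V (c i)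
  have hUstarV : ∀ i, Ustar i = V (c i) := by
    intro i
    funext k
    have hθi := (hθr i).1
    have hs : (0:ℝ) < Real.sqrt (δ (c i)) := Real.sqrt_pos.mpr (hδpos (c i))
    have hsum1 : Real.sqrt (δ (c i)) ^ 2 * (∑ k', Q (c i) k' ^ 2) = 1 := by
      have h1 := hVrow (c i) (c i)
      rw [if_pos rfl] at h1
      rw [← h1, Finset.mul_sum]
      refine Finset.sum_congr rfl fun k' _ => ?_
      rw [hVk]; ring
    have hQsum : (∑ k', Q (c i) k' ^ 2) = 1 / Real.sqrt (δ (c i)) ^ 2 :=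
      eq_one_div_of_mul_eq_one_left (by rw [mul_comm]; exact hsum1)
    have hsq : (∑ k', (Ur i k') ^ 2) = (θr i / Real.sqrt (δ (c i))) ^ 2 := by
      have h4 : (∑ k', (Ur i k') ^ 2) = θr i ^ 2 * ∑ k', Q (c i) k' ^ 2 := by
        rw [Finset.mul_sum]
        refine Finset.sum_congr rfl fun k' _ => ?_
        rw [hrowU]; ring
      rw [h4, hQsum, div_pow]
      ring
    have hsqrt : Real.sqrt (∑ k', (Ur i k') ^ 2) = θr i / Real.sqrt (δ (c i)) := by
      rw [hsq, Real.sqrt_sq (le_of_lt (div_pos hθi hs))]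
    rw [hUstar, hsqrt, hrowU, hVk]
    field_simp
  -- Step G: conclusions
  intro i i₂
  have hZiff : Zr i = Zr i₂ ↔ c i = c i₂ := by
    constructor
    · intro h
      have h5 : Zr i₂ (c i) = 1 := by rw [← h]; exact hc i
      exact hcu i₂ (c i) h5
    · intro h
      funext k
      rw [hZind, hZind, h]
  have hUiff : Ustar i = Ustar i₂ ↔ c i = c i₂ := by
    constructor
    · intro h
      by_contra hne
      have hV12 : V (c i) = V (c i₂) := by rw [← hUstarV, ← hUstarV, h]
      have h1 := hVrow (c i) (c i)
      have h0 := hVrow (c i) (c i₂)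
      rw [if_pos rfl] at h1
      rw [if_neg hne] at h0
      rw [hV12] at h1 h0
      linarith
    · intro h
      rw [hUstarV, hUstarV, h]
  refine ⟨hUiff.trans hZiff.symm, fun hne => ?_⟩
  have hcne : c i ≠ c i₂ := fun h => hne (hZiff.mpr h)
  have h1 := hVrow (c i) (c i); rw [if_pos rfl] at h1
  have h2 := hVrow (c i₂) (c i₂); rw [if_pos rfl] at h2
  have h0 := hVrow (c i) (c i₂); rw [if_neg hcne] at h0
  have hsum2 : (∑ k, (Ustar i k - Ustar i₂ k) ^ 2) = 2 := by
    simp only [hUstarV]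
    have hterm : ∀ k, (V (c i) k - V (c i₂) k) ^ 2 =
        V (c i) k * V (c i) k + V (c i₂) k * V (c i₂) k
          - 2 * (V (c i) k * V (c i₂) k) := fun k => by ring
    simp only [hterm]
    rw [Finset.sum_sub_distrib, Finset.sum_add_distrib, ← Finset.mul_sum, h1, h2, h0]
    ring
  rw [hsum2]
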